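/- Let M be a real symmetric m×m matrix (m ≥ 2) with strictly positive entries satisfying the Alexandrov–Fenchel-type inequality ⟨x, My⟩² ≥ ⟨x, Mx⟩·⟨y, My⟩ for all entrywise nonnegative x, y. Suppose M ≠ 0 and det(M) = 0. Then there exist linearly independent vectors x, y ∈ ℝ^m with strictly positive entries such that ⟨x, My⟩² = ⟨x, Mx⟩·⟨y, My⟩. -/

import Mathlib

open Matrix

/-- Equality cases of Shephard's inequalities: if a nonzero symmetric positive matrix
satisfying the AF-type inequality has vanishing determinant, then equality is attained
in the AF-type inequality at some pair of linearly independent strictly positive vectors. -/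
theorem stmt_7 (m : ℕ) (hm : 2 ≤ m) (M : Matrix (Fin m) (Fin m) ℝ) (hM : M.IsHermitian)
    (hpos : ∀ i j, 0 < M i j)
    (hAF : ∀ x y : Fin m → ℝ, (∀ i, 0 ≤ x i) → (∀ i, 0 ≤ y i) →
      (x ⬝ᵥ M.mulVec x) * (y ⬝ᵥ M.mulVec y) ≤ (x ⬝ᵥ M.mulVec y) ^ 2)
    (hM0 : M ≠ 0) (hdet : M.det = 0) :
    ∃ x y : Fin m → ℝ, (∀ i, 0 < x i) ∧ (∀ i, 0 < y i) ∧
      LinearIndependent ℝ ![x, y] ∧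
      (x ⬝ᵥ M.mulVec y) ^ 2 = (x ⬝ᵥ M.mulVec x) * (y ⬝ᵥ M.mulVec y) := by
  obtain ⟨z, hz0, hz⟩ := (Matrix.exists_mulVec_eq_zero_iff).mpr hdet
  have hne : Nonempty (Fin m) := ⟨⟨0, by omega⟩⟩
  -- z is not constant
  have hMz0 : ∀ c : ℝ, z ≠ fun _ => c := by
    intro c hc
    have hc0 : c ≠ 0 := by
      rintro rfl; exact hz0 (by rw [hc]; rfl)
    have h0 : M.mulVec z (Fin.mk 0 (by omega)) = 0 := by rw [hz]; rfl
    rw [hc] at h0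
    have : M.mulVec (fun _ => c) (Fin.mk 0 (by omega)) = c * ∑ j, M ⟨0, by omega⟩ j := by
      simp [Matrix.mulVec, dotProduct, Finset.mul_sum, mul_comm]
    rw [this] at h0
    have hsum : 0 < ∑ j, M (⟨0, by omega⟩ : Fin m) j :=
      Finset.sum_pos (fun j _ => hpos _ j) Finset.univ_nonempty
    exact hc0 (by rcases mul_eq_zero.mp h0 with h | h; exact h; linarith)
  obtain ⟨i, j, hij⟩ : ∃ i j, z i ≠ z j := by
    by_contra h
    push_neg at h
    exact hMz0 (z ⟨0, by omega⟩) (funext fun i => h i _)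
  set S : ℝ := ∑ k, |z k| with hS
  have hS0 : 0 ≤ S := Finset.sum_nonneg fun k _ => abs_nonneg _
  set ε : ℝ := (1 + S)⁻¹ with hε
  have hε0 : 0 < ε := by positivity
  set x : Fin m → ℝ := fun _ => 1 with hx
  set y : Fin m → ℝ := fun k => 1 + ε * z k with hy
  have hypos : ∀ k, 0 < y k := by
    intro k
    have h1 : |z k| ≤ S := Finset.single_le_sum (fun k _ => abs_nonneg (z k)) (Finset.mem_univ k)
    have h2 : ε * |z k| < 1 := by
      rw [hε]
      rw [inv_mul_lt_iff₀ (by linarith)]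
      linarith
    have := neg_abs_le (z k)
    have h3 : -(ε * |z k|) ≤ ε * z k := by nlinarith
    simp only [hy]; linarith
  have hyx : y = x + ε • z := by
    funext k; simp [hx, hy, Pi.smul_apply, smul_eq_mul]
  have hMy : M.mulVec y = M.mulVec x := by
    rw [hyx, Matrix.mulVec_add, Matrix.mulVec_smul, hz]
    simp
  have hzMx : z ⬝ᵥ M.mulVec x = 0 := by
    rw [Matrix.dotProduct_mulVec]
    have hsymm : Mᵀ = M := by
      ext a b
      have := congrFun (congrFun hM a) b
      simpa using this
    have : M.vecMul z = M.mulVec z := by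
      rw [← Matrix.mulVec_transpose, hsymm]
    rw [this, hz]
    simp
  refine ⟨x, y, fun _ => one_pos, hypos, ?_, ?_⟩
  · rw [LinearIndependent.pair_iff]
    intro s t hst
    have hst' : ∀ k, s + t * (1 + ε * z k) = 0 := by
      intro k
      have := congrFun hst k
      simpa [hx, hy, smul_eq_mul] using this
    have hi := hst' i
    have hj := hst' j
    have ht : t = 0 := by
      have : t * ε * (z i - z j) = 0 := by ring_nf; nlinarith [hi, hj]
      rcases mul_eq_zero.mp this with h | h
      · rcases mul_eq_zero.mp h with h | h
        · exact h
        · exact absurd h (ne_of_gt hε0)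
      · exact absurd (by linarith) hij
    constructor
    · rw [ht] at hi; linarith
    · exact ht
  · rw [hMy, hyx]
    rw [add_dotProduct, smul_dotProduct, hzMx]
    simp
    ring
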